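/- Let Γ be a simple graph on m vertices and let G = {G_i}_{i=1}^m and H = {H_i}_{i=1}^m be two collections of groups such that for each 1 ≤ i ≤ m the underlying sets of G_i and H_i have the same cardinality. Then the graph product kernels K_Γ(G) and K_Γ(H) are isomorphic as groups. -/

import Mathlib

open scoped Topology
open ContinuousMap

noncomputable section

/-- The map on generalized loops induced by a continuous map. -/
def GenLoop.push {X Y : Type} [TopologicalSpace X] [TopologicalSpace Y] {N : Type} (f : C(X, Y))
    {x : X} (p : GenLoop N X x) : GenLoop N Y (f x) :=
  ⟨f.comp p.1, fun t ht => by simp [p.2 t ht]⟩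

/-- The map induced by a continuous map on homotopy groups (as pointed sets). -/
def piMap {X Y : Type} [TopologicalSpace X] [TopologicalSpace Y] (f : C(X, Y)) (N : Type) (x : X) :
    HomotopyGroup N X x → HomotopyGroup N Y (f x) :=
  Quotient.map (GenLoop.push f) (fun _ _ h => Nonempty.map (fun H => H.compContinuousMap f) h)

/-- A weakly contractible space: all homotopy groups (including `π₀`) are trivial. -/
def WeaklyContractible (X : Type) [TopologicalSpace X] : Prop :=
  Nonempty X ∧ ∀ (x : X) (n : ℕ), Subsingleton (HomotopyGroup (Fin n) X x)

/-- A weak homotopy equivalence: induces bijections on all homotopy groups at all basepoints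
(including `π₀`). -/
def IsWeakHomotopyEquiv {X Y : Type} [TopologicalSpace X] [TopologicalSpace Y]
    (f : C(X, Y)) : Prop :=
  (Nonempty Y → Nonempty X) ∧ ∀ (x : X) (n : ℕ), Function.Bijective (piMap f (Fin n) x)

/-- `X` is a homotopy retract of `Y`. -/
def HomotopyRetract (X Y : Type) [TopologicalSpace X] [TopologicalSpace Y] : Prop :=
  ∃ (i : C(X, Y)) (r : C(Y, X)), (r.comp i).Homotopic (ContinuousMap.id X)

/-- The underlying map of a homotopy equivalence. -/
def IsHEquivMap {X Y : Type} [TopologicalSpace X] [TopologicalSpace Y] (f : C(X, Y)) : Prop :=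
  ∃ g : C(Y, X), (g.comp f).Homotopic (ContinuousMap.id X) ∧
    (f.comp g).Homotopic (ContinuousMap.id Y)

/-- The homotopy fibre of `f` over `b`. -/
def HFiber {E B : Type} [TopologicalSpace E] [TopologicalSpace B] (f : C(E, B)) (b : B) : Type :=
  { z : E × C(unitInterval, B) // z.2 0 = f z.1 ∧ z.2 1 = b }

instance {E B : Type} [TopologicalSpace E] [TopologicalSpace B] (f : C(E, B)) (b : B) :
    TopologicalSpace (HFiber f b) :=
  instTopologicalSpaceSubtype

/-- The projection from the homotopy fibre to the total space. -/
def HFiber.proj {E B : Type} [TopologicalSpace E] [TopologicalSpace B] (f : C(E, B)) (b : B) :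
    C(HFiber f b, E) :=
  ⟨fun z => z.1.1, by fun_prop⟩

/-- Comparison map from `F` to the homotopy fibre of `p`, given a null-homotopy of `p ∘ i`. -/
def hfibCompare {F E B : Type} [TopologicalSpace F] [TopologicalSpace E] [TopologicalSpace B]
    (i : C(F, E)) (p : C(E, B)) (b : B)
    (H : ContinuousMap.Homotopy (p.comp i) (ContinuousMap.const F b)) : C(F, HFiber p b) where
  toFun z := ⟨(i z, (H.toContinuousMap.comp ContinuousMap.prodSwap).curry z),
    by simp, by simp⟩
  continuous_toFun := by
    apply Continuous.subtype_mk
    exact i.continuous.prodMk ((H.toContinuousMap.comp ContinuousMap.prodSwap).curry).continuous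

/-- A sequence `F → E → B` is a homotopy fibration if `p ∘ i` is null-homotopic via a homotopy
for which the induced comparison map from `F` to the homotopy fibre of `p` is a homotopy
equivalence. -/
def IsHomotopyFibration {F E B : Type} [TopologicalSpace F] [TopologicalSpace E]
    [TopologicalSpace B] (i : C(F, E)) (p : C(E, B)) : Prop :=
  ∃ (b : B) (H : ContinuousMap.Homotopy (p.comp i) (ContinuousMap.const F b)),
    IsHEquivMap (hfibCompare i p b H)


open CategoryTheory


/-- The singular chain complex functor with coefficients in a commutative ring `R`. -/
def singularChains (R : Type) [CommRing R] : TopCat.{0} ⥤ ChainComplex (ModuleCat.{0} R) ℕ :=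
  TopCat.toSSet ⋙ ((SimplicialObject.whiskering _ _).obj (ModuleCat.free R)) ⋙
    AlgebraicTopology.alternatingFaceMapComplex _

/-- Singular homology of a space with coefficients in `R`. -/
def SH (R : Type) [CommRing R] (n : ℕ) (X : Type) [TopologicalSpace X] : ModuleCat R :=
  ((singularChains R).obj (TopCat.of X)).homology n

/-- The induced map on singular homology. -/
def SHmap (R : Type) [CommRing R] (n : ℕ) {X Y : Type} [TopologicalSpace X] [TopologicalSpace Y]
    (f : C(X, Y)) : SH R n X ⟶ SH R n Y :=
  HomologicalComplex.homologyMap ((singularChains R).map (TopCat.ofHom f : TopCat.of X ⟶ TopCat.of Y)) n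

/-- An abelian group is a finitely generated `R`-module (for some compatible `R`-module
structure). -/
def IsFGModuleOver (R : Type) [CommRing R] (M : Type) [AddCommGroup M] : Prop :=
  ∃ (N : Type) (_ : AddCommGroup N) (_ : Module R N),
    Module.Finite R N ∧ Nonempty (M ≃+ N)

/-- A (multiplicative) group is, up to isomorphism, a finitely generated `R`-module. -/
def IsFGMulOver (R : Type) [CommRing R] (G : Type) [Group G] : Prop :=
  ∃ (N : Type) (_ : AddCommGroup N) (_ : Module R N),
    Module.Finite R N ∧ Nonempty (G ≃* Multiplicative N)

/-- A space has finite type over `R`: each reduced integral homology group is a finitely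
generated `R`-module.  (For connected spaces and `R = ℤ` this is the usual notion of
finite type.) -/
def FiniteTypeOver (R : Type) [CommRing R] (X : Type) [TopologicalSpace X] : Prop :=
  ∀ n : ℕ, 1 ≤ n → IsFGModuleOver R (SH ℤ n X)

/-- The ideal `(p) ⊆ ℤ`. -/
def pIdeal (p : ℕ) : Ideal ℤ := Ideal.span {(p : ℤ)}

instance pIdeal.isPrime (p : ℕ) [hp : Fact p.Prime] : (pIdeal p).IsPrime := by
  rw [pIdeal, Ideal.span_singleton_prime (by exact_mod_cast hp.out.ne_zero)]
  exact_mod_cast Nat.prime_iff_prime_int.mp hp.out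

/-- The integers localized at the prime `p`. -/
abbrev Zloc (p : ℕ) [Fact p.Prime] : Type := Localization.AtPrime (pIdeal p)

/-- A nonempty path-connected space all of whose homology with coefficients in `R` vanishes
in positive degrees, i.e. whose reduced `R`-homology vanishes. -/
def AcyclicOver (R : Type) [CommRing R] (X : Type) [TopologicalSpace X] : Prop :=
  Nonempty X ∧ PathConnectedSpace X ∧ ∀ n : ℕ, 1 ≤ n → Subsingleton (SH R n X)

/-- An acyclic space: reduced integral homology vanishes. -/
def AcyclicSpace (X : Type) [TopologicalSpace X] : Prop := AcyclicOver ℤ X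

/-- A homology rational sphere: a connected space with `H̃⋆(X;ℤ) ≅ ℚ`, concentrated in a
single (positive) degree. -/
def IsHomologyRationalSphere (X : Type) [TopologicalSpace X] : Prop :=
  Nonempty X ∧ PathConnectedSpace X ∧ ∃ d : ℕ, 1 ≤ d ∧ Nonempty ((SH ℤ d X) ≃+ ℚ) ∧
    ∀ n : ℕ, 1 ≤ n → n ≠ d → Subsingleton (SH ℤ n X)



/-! ### Local spaces, GEMs and generalised Postnikov towers -/

/-- `S`-local space: the `k`-th power map on all homotopy groups is bijective
for every `k` with `S k`. -/
def SLocalSpace (S : ℕ → Prop) (X : Type) [TopologicalSpace X] : Prop :=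
  ∀ (x : X) (n k : ℕ), S k →
    Function.Bijective (fun g : HomotopyGroup (Fin (n + 1)) X x => g ^ k)

/-- The family of exponents inverted in `p`-local spaces. -/
def pInv (p : ℕ) : ℕ → Prop := fun k => k ≠ 0 ∧ ¬ (p ∣ k)

/-- The family of exponents inverted in rational spaces. -/
def ratInv : ℕ → Prop := fun k => k ≠ 0

/-- No exponents inverted (integral setting). -/
def intInv : ℕ → Prop := fun _ => False

/-- Homotopy groups are finitely generated `R`-modules in every degree. -/
def PiFiniteOver (R : Type) [CommRing R] (X : Type) [TopologicalSpace X] : Prop :=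
  ∀ (x : X) (n : ℕ), IsFGMulOver R (HomotopyGroup (Fin (n + 1)) X x)

/-- An Eilenberg-MacLane space `K(A, n+1)` for some abelian group `A`. -/
def IsEMSpace (Y : Type) [TopologicalSpace Y] (n : ℕ) : Prop :=
  Nonempty Y ∧ PathConnectedSpace Y ∧
    (∀ (y : Y) (k : ℕ), k ≠ n + 1 → Subsingleton (HomotopyGroup (Fin k) Y y)) ∧
    (∀ (y : Y) (a b : HomotopyGroup (Fin (n + 1)) Y y), a * b = b * a)

/-- A generalised Eilenberg-MacLane space (GEM): a space homotopy equivalent to a (possibly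
infinite) product of Eilenberg-MacLane spaces of abelian groups. -/
def IsGEM (Z : Type) [TopologicalSpace Z] : Prop :=
  ∃ (ι : Type) (Y : ι → Type) (_ : ∀ i, TopologicalSpace (Y i)) (n : ι → ℕ),
    (∀ i, IsEMSpace (Y i) (n i)) ∧ Nonempty (ContinuousMap.HomotopyEquiv Z (∀ i, Y i))

/-- One step of a generalised Postnikov tower: `q : Z' → Z` is, up to homotopy, the fibre
inclusion of a homotopy fibration `Z' → Z → K` with `K` a `c`-connected GEM which is `S`-local,
and of finite type over `R` when `ft = true`. -/
def GPTStep (R : Type) [CommRing R] (S : ℕ → Prop) (ft : Bool) (c : ℕ)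
    {Z' Z : Type} [TopologicalSpace Z'] [TopologicalSpace Z] (q : C(Z', Z)) : Prop :=
  ∃ (K : Type) (_ : TopologicalSpace K) (k : C(Z, K)),
    IsGEM K ∧ (∀ (y : K) (j : ℕ), j ≤ c → Subsingleton (HomotopyGroup (Fin j) K y)) ∧
    SLocalSpace S K ∧ (ft = true → PiFiniteOver R K) ∧ IsHomotopyFibration q k

/-- `X` admits a generalised Postnikov tower of length `l` whose principal fibrations have as
fibres `c`-connected GEMs which are `S`-local, and of finite type over `R` when `ft = true`.
(`c = 1` gives the usual simply-connected GEM condition.) -/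
def HasGPT (R : Type) [CommRing R] (S : ℕ → Prop) (ft : Bool) (c : ℕ)
    (X : Type) [TopologicalSpace X] (l : ℕ) : Prop :=
  ∃ (Z : ℕ → Type) (_ : ∀ n, TopologicalSpace (Z n)) (q : ∀ n, C(Z (n + 1), Z n)),
    WeaklyContractible (Z 0) ∧ (∀ n < l, GPTStep R S ft c (q n)) ∧
    ∃ f : C(X, Z l), IsWeakHomotopyEquiv f

/-- A universal cover: a covering map with simply connected total space. -/
def IsUniversalCover {X' X : Type} [TopologicalSpace X'] [TopologicalSpace X]
    (q : C(X', X)) : Prop :=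
  IsCoveringMap (q : X' → X) ∧ SimplyConnectedSpace X'

/-! ### The classes `P`, `F`, `K` and their local analogues -/

/-- The class `P` (in its `(R, S, loc)`-parametrised form): the minimal class, closed under
homotopy retracts, of connected spaces (`S`-local and of finite type over `R` when
`loc = true`) whose universal covers admit finite type (over `R`) `S`-local generalised
Postnikov towers of finite length. -/
def ClassPGen (R : Type) [CommRing R] (S : ℕ → Prop) (loc : Bool)
    (X : Type) [TopologicalSpace X] : Prop :=
  ConnectedSpace X ∧ (loc = true → SLocalSpace S X ∧ FiniteTypeOver R X) ∧
  ∃ (Y : Type) (_ : TopologicalSpace Y), ConnectedSpace Y ∧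
    (loc = true → SLocalSpace S Y ∧ FiniteTypeOver R Y) ∧
    (∃ (Y' : Type) (_ : TopologicalSpace Y') (c : C(Y', Y)), IsUniversalCover c ∧
      ∃ l : ℕ, HasGPT R S true 1 Y' l) ∧
    HomotopyRetract X Y

/-- The class `𝐏` of the paper. -/
def ClassP (X : Type) [TopologicalSpace X] : Prop := ClassPGen ℤ intInv false X

/-- The class `𝐏ₚ` of the paper. -/
def ClassPp (p : ℕ) [Fact p.Prime] (X : Type) [TopologicalSpace X] : Prop :=
  ClassPGen (Zloc p) (pInv p) true X

/-- The class `𝐏₀` of the paper. -/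
def ClassP0 (X : Type) [TopologicalSpace X] : Prop := ClassPGen ℚ ratInv true X

/-- The class `F` (parametrised): connected spaces whose universal covers are of finite type
(over `R`) and have non-trivial homotopy groups in only finitely many dimensions. -/
def ClassFGen (R : Type) [CommRing R] (S : ℕ → Prop) (loc : Bool)
    (X : Type) [TopologicalSpace X] : Prop :=
  ConnectedSpace X ∧ (loc = true → SLocalSpace S X ∧ FiniteTypeOver R X) ∧
  ∃ (X' : Type) (_ : TopologicalSpace X') (c : C(X', X)), IsUniversalCover c ∧
    FiniteTypeOver R X' ∧ (loc = true → SLocalSpace S X') ∧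
    ∃ N : ℕ, ∀ n ≥ N, ∀ x' : X', Subsingleton (HomotopyGroup (Fin (n + 1)) X' x')

/-- The class `𝐅` of the paper. -/
def ClassF (X : Type) [TopologicalSpace X] : Prop := ClassFGen ℤ intInv false X

/-- The class `𝐅ₚ` of the paper. -/
def ClassFp (p : ℕ) [Fact p.Prime] (X : Type) [TopologicalSpace X] : Prop :=
  ClassFGen (Zloc p) (pInv p) true X

/-- The class `𝐅₀` of the paper. -/
def ClassF0 (X : Type) [TopologicalSpace X] : Prop := ClassFGen ℚ ratInv true X

/-- `X` admits a classical Postnikov tower (consisting of stages `P n`, comparison maps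
`f n : X → P n`, structure maps `q n : P (n+1) → P n` and `k`-invariants
`k n : P n → L n` with `L n` an Eilenberg-MacLane space of dimension `n + 2`) in which all but
finitely many of the `k`-invariants are trivial (null-homotopic). -/
def HasFinitelyManyKInvariants (X : Type) [TopologicalSpace X] : Prop :=
  ∃ (P : ℕ → Type) (_ : ∀ n, TopologicalSpace (P n))
    (f : ∀ n, C(X, P n)) (q : ∀ n, C(P (n + 1), P n))
    (L : ℕ → Type) (_ : ∀ n, TopologicalSpace (L n)) (k : ∀ n, C(P n, L n)),
    WeaklyContractible (P 0) ∧
    (∀ n, (f n).Homotopic ((q n).comp (f (n + 1)))) ∧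
    (∀ (n : ℕ) (x : X) (j : ℕ), j ≤ n → Function.Bijective (piMap (f n) (Fin j) x)) ∧
    (∀ (n : ℕ) (y : P n) (j : ℕ), j > n → Subsingleton (HomotopyGroup (Fin j) (P n) y)) ∧
    (∀ n, IsEMSpace (L n) (n + 1)) ∧
    (∀ n, IsHomotopyFibration (q n) (k n)) ∧
    Set.Finite {n : ℕ | ¬ ∃ y : L n, (k n).Homotopic (ContinuousMap.const (P n) y)}

/-- The class `K` (parametrised): connected spaces whose universal covers are of finite type
(over `R`) and have only finitely many non-trivial `k`-invariants. -/
def ClassKGen (R : Type) [CommRing R] (S : ℕ → Prop) (loc : Bool)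
    (X : Type) [TopologicalSpace X] : Prop :=
  ConnectedSpace X ∧ (loc = true → SLocalSpace S X ∧ FiniteTypeOver R X) ∧
  ∃ (X' : Type) (_ : TopologicalSpace X') (c : C(X', X)), IsUniversalCover c ∧
    FiniteTypeOver R X' ∧ (loc = true → SLocalSpace S X') ∧
    HasFinitelyManyKInvariants X'

/-- The class `𝐊` of the paper. -/
def ClassK (X : Type) [TopologicalSpace X] : Prop := ClassKGen ℤ intInv false X

/-- The class `𝐊ₚ` of the paper. -/
def ClassKp (p : ℕ) [Fact p.Prime] (X : Type) [TopologicalSpace X] : Prop :=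
  ClassKGen (Zloc p) (pInv p) true X

/-- The class `𝐊₀` of the paper. -/
def ClassK0 (X : Type) [TopologicalSpace X] : Prop := ClassKGen ℚ ratInv true X

/-- The class `𝐄₀` of the paper: connected spaces whose universal cover is rational elliptic,
i.e. a rational space with finite dimensional rational homotopy and rational homology. -/
def ClassE0 (X : Type) [TopologicalSpace X] : Prop :=
  ConnectedSpace X ∧
  ∃ (X' : Type) (_ : TopologicalSpace X') (c : C(X', X)), IsUniversalCover c ∧
    SLocalSpace ratInv X' ∧
    (∀ (x' : X') (n : ℕ), IsFGMulOver ℚ (HomotopyGroup (Fin (n + 1)) X' x')) ∧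
    (∃ N : ℕ, ∀ n ≥ N, ∀ x' : X', Subsingleton (HomotopyGroup (Fin (n + 1)) X' x')) ∧
    (∀ n : ℕ, 1 ≤ n → IsFGModuleOver ℚ (SH ℚ n X')) ∧
    (∃ N : ℕ, ∀ n ≥ N, Subsingleton (SH ℚ n X'))

/-! ### Asphericity and connectivity -/

/-- An aspherical (`K(π,1)`) space. -/
def IsAspherical (X : Type) [TopologicalSpace X] : Prop :=
  Nonempty X ∧ PathConnectedSpace X ∧
    ∀ (x : X) (n : ℕ), 2 ≤ n → Subsingleton (HomotopyGroup (Fin n) X x)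

/-- `X` is a `K(G, 1)`. -/
def IsKpi1Of (X : Type) [TopologicalSpace X] (G : Type) [Group G] : Prop :=
  IsAspherical X ∧ ∃ x : X, Nonempty (FundamentalGroup X x ≃* G)

/-- An `r`-connected space: homotopy groups vanish in degrees `≤ r`. -/
def IsNConnected (r : ℕ) (X : Type) [TopologicalSpace X] : Prop :=
  Nonempty X ∧ ∀ (x : X) (k : ℕ), k ≤ r → Subsingleton (HomotopyGroup (Fin k) X x)


/-! ### Cones, suspensions, smash products and pushouts -/

/-- The (unreduced) cone on `X`: `X × I` with `X × {1}` collapsed to a point. -/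
def TopCone (X : Type) [TopologicalSpace X] : Type :=
  Quot (fun a b : X × unitInterval => a.2 = 1 ∧ b.2 = 1)

instance (X : Type) [TopologicalSpace X] : TopologicalSpace (TopCone X) :=
  inferInstanceAs (TopologicalSpace (Quot _))

/-- The inclusion of `X` into the base of the cone. -/
def coneIncl (X : Type) [TopologicalSpace X] : C(X, TopCone X) :=
  ⟨fun x => Quot.mk _ (x, 0), continuous_quot_mk.comp (by fun_prop)⟩

/-- The map of cones induced by a continuous map. -/
def coneMap {X Y : Type} [TopologicalSpace X] [TopologicalSpace Y] (f : C(X, Y)) :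
    C(TopCone X, TopCone Y) :=
  ⟨Quot.lift (fun a => Quot.mk _ (f a.1, a.2))
      (fun _ _ h => Quot.sound ⟨h.1, h.2⟩),
    continuous_quot_lift _ (continuous_quot_mk.comp (by fun_prop))⟩

theorem coneMap_mapsTo {X Y : Type} [TopologicalSpace X] [TopologicalSpace Y] (f : C(X, Y)) :
    Set.MapsTo (coneMap f) (Set.range (coneIncl X)) (Set.range (coneIncl Y)) := by
  rintro _ ⟨x, rfl⟩; exact ⟨f x, rfl⟩

/-- The reduced suspension of a pointed space: `X × I` with `X × {0} ∪ X × {1} ∪ {x₀} × I`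
collapsed to a point. -/
def RSusp (X : Type) [TopologicalSpace X] (x0 : X) : Type :=
  Quot (fun a b : X × unitInterval =>
    (a.2 = 0 ∨ a.2 = 1 ∨ a.1 = x0) ∧ (b.2 = 0 ∨ b.2 = 1 ∨ b.1 = x0))

instance (X : Type) [TopologicalSpace X] (x0 : X) : TopologicalSpace (RSusp X x0) :=
  inferInstanceAs (TopologicalSpace (Quot _))

/-- The basepoint of the reduced suspension. -/
def RSusp.pt (X : Type) [TopologicalSpace X] (x0 : X) : RSusp X x0 :=
  Quot.mk _ (x0, 0)

/-- The map of reduced suspensions induced by a pointed continuous map. -/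
def rsuspMap {X Y : Type} [TopologicalSpace X] [TopologicalSpace Y] {x0 : X} {y0 : Y}
    (f : C(X, Y)) (hf : f x0 = y0) : C(RSusp X x0, RSusp Y y0) :=
  ⟨Quot.lift (fun a => Quot.mk _ (f a.1, a.2))
      (by
        rintro a b ⟨ha, hb⟩
        refine Quot.sound ⟨?_, ?_⟩ <;>
          [rcases ha with h | h | h; rcases hb with h | h | h] <;>
          simp [h, hf]),
    continuous_quot_lift _ (continuous_quot_mk.comp (by fun_prop))⟩

/-- The half-smash `B ⋊ X = (B × X)/(B × {x₀})`. -/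
def HalfSmash (B X : Type) [TopologicalSpace B] [TopologicalSpace X] (x0 : X) : Type :=
  Quot (fun u v : B × X => u.2 = x0 ∧ v.2 = x0)

instance (B X : Type) [TopologicalSpace B] [TopologicalSpace X] (x0 : X) :
    TopologicalSpace (HalfSmash B X x0) :=
  inferInstanceAs (TopologicalSpace (Quot _))

/-- The smash product `A ∧ X = (A × X)/(A × {x₀} ∪ {a₀} × X)`. -/
def Smash (A X : Type) [TopologicalSpace A] [TopologicalSpace X] (a0 : A) (x0 : X) : Type :=
  Quot (fun u v : A × X => (u.1 = a0 ∨ u.2 = x0) ∧ (v.1 = a0 ∨ v.2 = x0))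

instance (A X : Type) [TopologicalSpace A] [TopologicalSpace X] (a0 : A) (x0 : X) :
    TopologicalSpace (Smash A X a0 x0) :=
  inferInstanceAs (TopologicalSpace (Quot _))

/-- The basepoint of a smash product. -/
def Smash.pt {A X : Type} [TopologicalSpace A] [TopologicalSpace X] (a0 : A) (x0 : X) :
    Smash A X a0 x0 :=
  Quot.mk _ (a0, x0)

/-- The wedge `U ∨ V`. -/
def Wedge (U V : Type) [TopologicalSpace U] [TopologicalSpace V] (u0 : U) (v0 : V) : Type :=
  Quot (fun s t : U ⊕ V => (s = Sum.inl u0 ∨ s = Sum.inr v0) ∧ (t = Sum.inl u0 ∨ t = Sum.inr v0))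

instance (U V : Type) [TopologicalSpace U] [TopologicalSpace V] (u0 : U) (v0 : V) :
    TopologicalSpace (Wedge U V u0 v0) :=
  inferInstanceAs (TopologicalSpace (Quot _))

/-- The relation defining the pushout of `B ←f− A −g→ X`. -/
def PushoutRel {A B X : Type} (f : A → B) (g : A → X) (u v : B ⊕ X) : Prop :=
  ∃ a : A, u = Sum.inl (f a) ∧ v = Sum.inr (g a)

/-- The (strict) topological pushout of `B ←f− A −g→ X`. -/
def TopPushout {A B X : Type} [TopologicalSpace A] [TopologicalSpace B] [TopologicalSpace X]
    (f : C(A, B)) (g : C(A, X)) : Type :=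
  Quot (PushoutRel f g)

instance {A B X : Type} [TopologicalSpace A] [TopologicalSpace B] [TopologicalSpace X]
    (f : C(A, B)) (g : C(A, X)) : TopologicalSpace (TopPushout f g) :=
  inferInstanceAs (TopologicalSpace (Quot _))

/-! ### Simplicial complexes and polyhedral products -/

/-- An (abstract) simplicial complex on the vertex set `[m] = {0, …, m-1}`. -/
structure SimplicialComplexOn (m : ℕ) where
  faces : Set (Finset (Fin m))
  empty_mem : ∅ ∈ faces
  down_closed : ∀ {σ τ : Finset (Fin m)}, σ ∈ faces → τ ⊆ σ → τ ∈ faces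
  vertex_mem : ∀ i : Fin m, {i} ∈ faces

namespace SimplicialComplexOn

/-- `K` is the full simplex on its vertex set. -/
def IsSimplex {m : ℕ} (K : SimplicialComplexOn m) : Prop := K.faces = Set.univ

/-- A minimal non-face of `K`. -/
def IsMinNonFace {m : ℕ} (K : SimplicialComplexOn m) (M : Finset (Fin m)) : Prop :=
  2 ≤ M.card ∧ M ∉ K.faces ∧ ∀ τ : Finset (Fin m), τ ⊂ M → τ ∈ K.faces

/-- A flag complex: all minimal non-faces have cardinality two. -/
def IsFlag {m : ℕ} (K : SimplicialComplexOn m) : Prop :=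
  ∀ M : Finset (Fin m), K.IsMinNonFace M → M.card = 2

/-- The minimal non-faces are mutually disjoint. -/
def MinNonFacesDisjoint {m : ℕ} (K : SimplicialComplexOn m) : Prop :=
  ∀ M M' : Finset (Fin m), K.IsMinNonFace M → K.IsMinNonFace M' → M ≠ M' →
    Disjoint M M'

end SimplicialComplexOn

/-- The polyhedral product `Z_K(X, A)` of the family of pairs `(X i, A i)`, as a subset of
`∏ i, X i`. -/
def polyProd {m : ℕ} (K : SimplicialComplexOn m) (X : Fin m → Type)
    [∀ i, TopologicalSpace (X i)] (A : ∀ i, Set (X i)) : Set (∀ i, X i) :=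
  {z | ∃ σ ∈ K.faces, ∀ i, i ∉ σ → z i ∈ A i}

/-- The continuous inclusion of a subspace. -/
def inclCM {X : Type} [TopologicalSpace X] (A : Set X) : C(A, X) :=
  ⟨Subtype.val, continuous_subtype_val⟩

/-- The map of polyhedral products induced by a family of maps of pairs. -/
def polyProdMap {m : ℕ} (K : SimplicialComplexOn m) {X Y : Fin m → Type}
    [∀ i, TopologicalSpace (X i)] [∀ i, TopologicalSpace (Y i)]
    {A : ∀ i, Set (X i)} {B : ∀ i, Set (Y i)} (f : ∀ i, C(X i, Y i))
    (hf : ∀ i, Set.MapsTo (f i) (A i) (B i)) :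
    C(polyProd K X A, polyProd K Y B) :=
  have hmem : ∀ z : polyProd K X A, (fun i => f i (z.1 i)) ∈ polyProd K Y B := fun z => by
    obtain ⟨σ, hσ, hz⟩ := z.2
    exact ⟨σ, hσ, fun i hi => hf i (hz i hi)⟩
  ⟨fun z => ⟨fun i => f i (z.1 i), hmem z⟩,
    Continuous.subtype_mk (continuous_pi fun i =>
      (f i).continuous.comp ((continuous_apply i).comp continuous_subtype_val)) hmem⟩

/-- The inclusion of the polyhedral product into the ambient product. -/
def polyProdProj {m : ℕ} (K : SimplicialComplexOn m) (X : Fin m → Type)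
    [∀ i, TopologicalSpace (X i)] (A : ∀ i, Set (X i)) :
    C(polyProd K X A, ∀ i, X i) :=
  ⟨Subtype.val, continuous_subtype_val⟩

/-! ### Cofibrations -/

/-- A map is a cofibration when it has the homotopy extension property. -/
def IsCofibration {A X : Type} [TopologicalSpace A] [TopologicalSpace X] (j : C(A, X)) : Prop :=
  ∀ (Y : Type) (_ : TopologicalSpace Y) (g : C(X, Y)) (h : C(unitInterval × A, Y)),
    (∀ a, h (0, a) = g (j a)) →
    ∃ H : C(unitInterval × X, Y), (∀ x, H (0, x) = g x) ∧ ∀ t a, H (t, j a) = h (t, a)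

/-- `(X, A)` is an NDR-pair: the inclusion `A → X` is a cofibration. -/
def IsNDRPair {X : Type} [TopologicalSpace X] (A : Set X) : Prop :=
  IsCofibration (inclCM A)


/-! ### The evaluation map from the cone on a homotopy fibre -/

/-- The canonical evaluation map `C(hofib(A → X)) → X`, sending `((a, γ), t)` to `γ t`. -/
def coneFibEval {X : Type} [TopologicalSpace X] (A : Set X) (x0 : X) :
    C(TopCone (HFiber (inclCM A) x0), X) :=
  ⟨Quot.lift (fun w : HFiber (inclCM A) x0 × unitInterval => w.1.1.2 w.2)
      (fun w w' h => by
        rw [h.1, h.2, w.1.2.2, w'.1.2.2]),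
    continuous_quot_lift _ (by
      have h1 : Continuous fun w : HFiber (inclCM A) x0 × unitInterval =>
          ((w.1.1.2, w.2) : C(unitInterval, X) × unitInterval) :=
        ((continuous_snd.comp (continuous_subtype_val.comp continuous_fst)).prodMk
          continuous_snd)
      exact ContinuousEval.continuous_eval.comp h1)⟩

theorem coneFibEval_mapsTo {X : Type} [TopologicalSpace X] (A : Set X) (x0 : X) :
    Set.MapsTo (coneFibEval A x0) (Set.range (coneIncl (HFiber (inclCM A) x0))) A := by
  rintro _ ⟨w, rfl⟩
  show w.1.2 0 ∈ A
  rw [w.2.1]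
  exact w.1.1.2

/-! ### Lusternik-Schnirelmann category and localizations -/

/-- `cat X ≤ n`: `X` is covered by `n + 1` open sets, each of which is contractible in `X`. -/
def LSCatLE (X : Type) [TopologicalSpace X] (n : ℕ) : Prop :=
  ∃ U : Fin (n + 1) → Set X, (∀ i, IsOpen (U i)) ∧ (⋃ i, U i) = Set.univ ∧
    ∀ i, ∃ x0 : X, (inclCM (U i)).Homotopic (ContinuousMap.const _ x0)

/-- `f : X → Y` is an `S`-localization (with coefficients `R`): `Y` is `S`-local and `f`
induces an isomorphism on homology with coefficients in `R`. -/
def IsLocalizationOver (R : Type) [CommRing R] (S : ℕ → Prop) {X Y : Type}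
    [TopologicalSpace X] [TopologicalSpace Y] (f : C(X, Y)) : Prop :=
  SLocalSpace S Y ∧ ∀ n : ℕ, Function.Bijective (SHmap R n f)

/-! ### The induced homomorphism on fundamental groups, and the plus construction -/

/-- The homomorphism induced by a continuous map on fundamental groups. -/
def pi1Hom {X Y : Type} [TopologicalSpace X] [TopologicalSpace Y] (f : C(X, Y)) (x : X) :
    FundamentalGroup X x →* FundamentalGroup Y (f x) :=
  CategoryTheory.Functor.mapEnd
    (X := FundamentalGroupoid.mk x)
    (FundamentalGroupoid.fundamentalGroupoidFunctor.map
      (show TopCat.of X ⟶ TopCat.of Y from TopCat.ofHom f))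

/-- `l : X → Y` is a Quillen plus construction with respect to the perfect normal subgroup
`P ≤ π₁(X, x)`: it kills exactly `P` on fundamental groups and its homotopy fibre is acyclic
(equivalently, it is a homology isomorphism for all local coefficient systems on `Y`). -/
def IsPlusConstructionWrt {X Y : Type} [TopologicalSpace X] [TopologicalSpace Y]
    (l : C(X, Y)) (x : X) (P : Subgroup (FundamentalGroup X x)) : Prop :=
  P.Normal ∧ ⁅P, P⁆ = P ∧
  Function.Surjective (pi1Hom l x) ∧ (pi1Hom l x).ker = P ∧
  AcyclicSpace (HFiber l (l x))

/-! ### Graph products of groups -/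

/-- The commutation relations defining a graph product. -/
def graphProdRels {m : ℕ} (Γ : SimpleGraph (Fin m)) (G : Fin m → Type)
    [∀ i, Group (G i)] : Set (Monoid.CoprodI G) :=
  {x | ∃ (i j : Fin m) (g : G i) (h : G j), Γ.Adj i j ∧
    x = Monoid.CoprodI.of g * Monoid.CoprodI.of h *
      (Monoid.CoprodI.of g)⁻¹ * (Monoid.CoprodI.of h)⁻¹}

/-- The graph product of the groups `G i` over the simple graph `Γ`. -/
def GraphProduct {m : ℕ} (Γ : SimpleGraph (Fin m)) (G : Fin m → Type)
    [∀ i, Group (G i)] : Type :=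
  Monoid.CoprodI G ⧸ Subgroup.normalClosure (graphProdRels Γ G)

instance {m : ℕ} (Γ : SimpleGraph (Fin m)) (G : Fin m → Type) [∀ i, Group (G i)] :
    Group (GraphProduct Γ G) :=
  inferInstanceAs (Group (Monoid.CoprodI G ⧸ Subgroup.normalClosure (graphProdRels Γ G)))

theorem graphProdRels_le_ker {m : ℕ} (Γ : SimpleGraph (Fin m)) (G : Fin m → Type)
    [∀ i, Group (G i)] :
    Subgroup.normalClosure (graphProdRels Γ G) ≤
      (Monoid.CoprodI.lift fun i => MonoidHom.mulSingle G i).ker := by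
  apply Subgroup.normalClosure_le_normal
  rintro x ⟨i, j, g, h, hadj, rfl⟩
  have hc : Commute (MonoidHom.mulSingle G i g) (MonoidHom.mulSingle G j h) :=
    Pi.mulSingle_commute hadj.ne g h
  simp only [SetLike.mem_coe, MonoidHom.mem_ker, map_mul, map_inv, Monoid.CoprodI.lift_of]
  rw [hc.eq]
  group

/-- The canonical homomorphism from the graph product to the direct product. -/
def GraphProduct.toPi {m : ℕ} (Γ : SimpleGraph (Fin m)) (G : Fin m → Type)
    [∀ i, Group (G i)] : GraphProduct Γ G →* ∀ i, G i :=
  QuotientGroup.lift _ (Monoid.CoprodI.lift fun i => MonoidHom.mulSingle G i)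
    (graphProdRels_le_ker Γ G)

/-- The graph product kernel `K_Γ(G)`: the kernel of the canonical homomorphism
`G^Γ → ∏ i, G i`. -/
def GraphProductKernel {m : ℕ} (Γ : SimpleGraph (Fin m)) (G : Fin m → Type)
    [∀ i, Group (G i)] : Subgroup (GraphProduct Γ G) :=
  (GraphProduct.toPi Γ G).ker

/-- The flag complex of a simple graph. -/
def flagComplex {m : ℕ} (Γ : SimpleGraph (Fin m)) : SimplicialComplexOn m where
  faces := {σ | ∀ i ∈ σ, ∀ j ∈ σ, i ≠ j → Γ.Adj i j}
  empty_mem := by simp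
  down_closed := fun hσ hτ i hi j hj hij => hσ i (hτ hi) j (hτ hj) hij
  vertex_mem := by
    intro i j hj k hk hjk
    simp only [Finset.mem_singleton] at hj hk
    exact absurd (hj.trans hk.symm) hjk


/-- A rational sphere `S^n_{(0)}` (`n ≥ 2`): a simply connected rational space whose reduced
integral homology is a single `ℚ` in degree `n`. -/
def IsRationalSphere (Y : Type) [TopologicalSpace Y] (n : ℕ) : Prop :=
  SimplyConnectedSpace Y ∧ SLocalSpace ratInv Y ∧ 2 ≤ n ∧
    Nonempty ((SH ℤ n Y) ≃+ ℚ) ∧ ∀ k : ℕ, 1 ≤ k → k ≠ n → Subsingleton (SH ℤ k Y)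

end

namespace GPK
open Function

variable {m : ℕ}

/-- Generator `(p, i, g)`: "move coordinate `i` of `p` to `g`". -/
abbrev Gen (S : Fin m → Type) : Type := (∀ i, S i) × Σ i, S i

def gen {S : Fin m → Type} (p : ∀ i, S i) (i : Fin m) (g : S i) : FreeGroup (Gen S) :=
  FreeGroup.of (p, ⟨i, g⟩)

def rels (Γ : SimpleGraph (Fin m)) (S : Fin m → Type) (e : ∀ i, S i) :
    Set (FreeGroup (Gen S)) :=
  {r | (∃ (p : ∀ k, S k) (i : Fin m) (a b : S i),
          r = gen p i a * gen (update p i a) i b * (gen p i b)⁻¹) ∨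
    (∃ (p : ∀ k, S k) (i j : Fin m) (a : S i) (b : S j), Γ.Adj i j ∧
      r = gen p i a * gen (update p i a) j b * (gen (update p j b) i a)⁻¹ * (gen p j b)⁻¹) ∨
    (∃ (p : ∀ k, S k) (i : Fin m) (g : S i),
      (∀ j, i < j → p j = e j ∨ Γ.Adj i j) ∧ r = gen p i g)}

/-- The combinatorial model for the graph product kernel, depending only on `Γ` and the
pointed types `(S i, e i)`. -/
def KP (Γ : SimpleGraph (Fin m)) (S : Fin m → Type) (e : ∀ i, S i) : Type :=
  PresentedGroup (rels Γ S e)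

instance (Γ : SimpleGraph (Fin m)) (S : Fin m → Type) (e : ∀ i, S i) : Group (KP Γ S e) :=
  inferInstanceAs (Group (PresentedGroup _))

variable {Γ : SimpleGraph (Fin m)} {S : Fin m → Type} {e : ∀ i, S i}

/-- The generators of `KP`. -/
def kgen (Γ : SimpleGraph (Fin m)) (e : ∀ i, S i) (p : ∀ i, S i) (i : Fin m) (g : S i) :
    KP Γ S e :=
  PresentedGroup.of (p, ⟨i, g⟩)

lemma mk_rel_eq_one {r : FreeGroup (Gen S)} (hr : r ∈ rels Γ S e) :
    (PresentedGroup.mk (rels Γ S e) r : KP Γ S e) = 1 := by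
  exact (QuotientGroup.eq_one_iff (N := Subgroup.normalClosure (rels Γ S e)) r).mpr
    (Subgroup.subset_normalClosure hr)

lemma krel1 (p : ∀ i, S i) (i : Fin m) (a b : S i) :
    kgen Γ e p i a * kgen Γ e (update p i a) i b = kgen Γ e p i b := by
  have h := mk_rel_eq_one (Γ := Γ) (e := e) (Or.inl ⟨p, i, a, b, rfl⟩)
  simp only [gen, map_mul, map_inv] at h
  rw [mul_inv_eq_one] at h
  exact h

lemma krel2 {i j : Fin m} (hadj : Γ.Adj i j) (p : ∀ i, S i) (a : S i) (b : S j) :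
    kgen Γ e p i a * kgen Γ e (update p i a) j b =
      kgen Γ e p j b * kgen Γ e (update p j b) i a := by
  have h := mk_rel_eq_one (Γ := Γ) (e := e) (Or.inr (Or.inl ⟨p, i, j, a, b, hadj, rfl⟩))
  simp only [gen, map_mul, map_inv] at h
  rw [mul_inv_eq_one, mul_inv_eq_iff_eq_mul] at h
  exact h

lemma krel3 {p : ∀ i, S i} {i : Fin m} (hp : ∀ j, i < j → p j = e j ∨ Γ.Adj i j) (g : S i) :
    kgen Γ e p i g = 1 :=
  mk_rel_eq_one (Γ := Γ) (e := e) (Or.inr (Or.inr ⟨p, i, g, hp, rfl⟩))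

lemma kgen_self (p : ∀ i, S i) (i : Fin m) : kgen Γ e p i (p i) = 1 := by
  have h := krel1 (Γ := Γ) (e := e) p i (p i) (p i)
  rw [update_eq_self] at h
  exact mul_eq_right.mp h

lemma kgen_inv (p : ∀ i, S i) (i : Fin m) (a : S i) :
    (kgen Γ e p i a)⁻¹ = kgen Γ e (update p i a) i (p i) := by
  refine inv_eq_of_mul_eq_one_right ?_
  have h := krel1 (Γ := Γ) (e := e) p i a (p i)
  rwa [kgen_self] at h

end GPK

namespace GPK2
open Function GPK

variable {m : ℕ} {Γ : SimpleGraph (Fin m)} {S T : Fin m → Type}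
  {e : ∀ i, S i} {f : ∀ i, T i}

lemma comp_update (E : ∀ i, S i ≃ T i) (p : ∀ i, S i) (i : Fin m) (a : S i) :
    (fun j => E j (update p i a j)) = update (fun j => E j (p j)) i (E i a) := by
  funext j
  rcases eq_or_ne j i with rfl | hj
  · simp
  · simp [update_of_ne hj]

lemma lift_rels (E : ∀ i, S i ≃ T i) (hE : ∀ i, E i (e i) = f i) :
    ∀ r ∈ rels Γ S e, FreeGroup.lift
      (fun x : Gen S => kgen Γ f (fun j => E j (x.1 j)) x.2.1 (E x.2.1 x.2.2)) r = 1 := by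
  rintro r (⟨p, i, a, b, rfl⟩ | ⟨p, i, j, a, b, hadj, rfl⟩ | ⟨p, i, g, hp, rfl⟩) <;>
    simp only [gen, map_mul, map_inv, FreeGroup.lift_apply_of, comp_update]
  · rw [krel1, mul_inv_cancel]
  · rw [show kgen Γ f (fun j' => E j' (p j')) i (E i a) *
        kgen Γ f (update (fun j' => E j' (p j')) i (E i a)) j (E j b) = _ from krel2 hadj _ _ _]
    group
  · rw [krel3 (fun j hj => ?_)]
    rcases hp j hj with h | h
    · exact Or.inl (by rw [h, hE])
    · exact Or.inr h

/-- The induced homomorphism on `KP` of a family of pointed maps coming from equivalences. -/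
def mapKP (E : ∀ i, S i ≃ T i) (hE : ∀ i, E i (e i) = f i) : KP Γ S e →* KP Γ T f :=
  PresentedGroup.toGroup (lift_rels E hE)

@[simp] lemma mapKP_kgen (E : ∀ i, S i ≃ T i) (hE : ∀ i, E i (e i) = f i)
    (p : ∀ i, S i) (i : Fin m) (g : S i) :
    mapKP (Γ := Γ) E hE (kgen Γ e p i g) = kgen Γ f (fun j => E j (p j)) i (E i g) :=
  PresentedGroup.toGroup.of _

lemma symm_pt (E : ∀ i, S i ≃ T i) (hE : ∀ i, E i (e i) = f i) (i : Fin m) :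
    (E i).symm (f i) = e i := by rw [← hE i, Equiv.symm_apply_apply]

/-- `KP` depends only on the pointed bijection type of the data. -/
def equivKP (E : ∀ i, S i ≃ T i) (hE : ∀ i, E i (e i) = f i) : KP Γ S e ≃* KP Γ T f := by
  refine MonoidHom.toMulEquiv (mapKP E hE)
    (mapKP (fun i => (E i).symm) (symm_pt E hE)) ?_ ?_
  · refine PresentedGroup.ext fun x => ?_
    obtain ⟨p, ⟨i, g⟩⟩ := x
    show mapKP (fun i => (E i).symm) (symm_pt E hE) (mapKP E hE (kgen Γ e p i g)) =
      kgen Γ e p i g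
    rw [mapKP_kgen, mapKP_kgen]
    simp
  · refine PresentedGroup.ext fun x => ?_
    obtain ⟨p, ⟨i, g⟩⟩ := x
    show mapKP E hE (mapKP (fun i => (E i).symm) (symm_pt E hE) (kgen Γ f p i g)) =
      kgen Γ f p i g
    rw [mapKP_kgen, mapKP_kgen]
    simp

end GPK2

namespace GPK3
open Function

variable {m : ℕ} (Γ : SimpleGraph (Fin m)) (G : Fin m → Type) [∀ i, Group (G i)]

def of' (i : Fin m) : G i →* GraphProduct Γ G :=
  (QuotientGroup.mk' _).comp Monoid.CoprodI.of

lemma toPi_of' (i : Fin m) (g : G i) :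
    GraphProduct.toPi Γ G (of' Γ G i g) = Pi.mulSingle i g := by
  show Monoid.CoprodI.lift (fun i => MonoidHom.mulSingle G i) (Monoid.CoprodI.of g) = _
  rw [Monoid.CoprodI.lift_of]
  rfl

lemma commute_of' {i j : Fin m} (h : Γ.Adj i j) (g : G i) (k : G j) :
    Commute (of' Γ G i g) (of' Γ G j k) := by
  rw [← commutatorElement_eq_one_iff_commute]
  have h1 : (QuotientGroup.mk' (Subgroup.normalClosure (graphProdRels Γ G)))
      (Monoid.CoprodI.of g * Monoid.CoprodI.of k * (Monoid.CoprodI.of g)⁻¹ *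
        (Monoid.CoprodI.of k)⁻¹) = 1 := by
    rw [QuotientGroup.mk'_apply, QuotientGroup.eq_one_iff]
    exact Subgroup.subset_normalClosure ⟨i, j, g, k, h, rfl⟩
  rw [commutatorElement_def]
  exact h1

/-- The transversal: ordered product of the coordinates. -/
def sElt (p : ∀ i, G i) : GraphProduct Γ G :=
  ((List.finRange m).map fun j => of' Γ G j (p j)).prod

lemma aux_prod_eval (p : ∀ i, G i) (k : Fin m) :
    ∀ l : List (Fin m), l.Nodup →
      ((l.map fun j => Pi.mulSingle j (p j)).map fun q => q k).prod =
        if k ∈ l then p k else 1 := by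
  intro l
  induction l with
  | nil => simp
  | cons j l ih =>
    intro hn
    rcases List.nodup_cons.mp hn with ⟨hj, hn'⟩
    simp only [List.map_cons, List.prod_cons, ih hn', List.mem_cons]
    rcases eq_or_ne k j with rfl | hk
    · rw [Pi.mulSingle_eq_same, if_neg hj, if_pos (Or.inl rfl), mul_one]
    · rw [Pi.mulSingle_eq_of_ne hk]
      simp [hk]

lemma toPi_sElt (p : ∀ i, G i) : GraphProduct.toPi Γ G (sElt Γ G p) = p := by
  funext k
  have h1 : GraphProduct.toPi Γ G (sElt Γ G p) =
      ((List.finRange m).map fun j => Pi.mulSingle j (p j)).prod := by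
    rw [sElt, MonoidHom.map_list_prod, List.map_map]
    exact congrArg List.prod (List.map_congr_left fun j _ => toPi_of' Γ G j (p j))
  have h2 := congrArg (Pi.evalMonoidHom G k) h1
  rw [MonoidHom.map_list_prod] at h2
  show Pi.evalMonoidHom G k (GraphProduct.toPi Γ G (sElt Γ G p)) = p k
  rw [h2, show ((List.finRange m).map fun j => Pi.mulSingle j (p j)).map
      (Pi.evalMonoidHom G k) = ((List.finRange m).map fun j =>
        Pi.mulSingle j (p j)).map fun q => q k from rfl,
    aux_prod_eval G p k (List.finRange m) (List.nodup_finRange m), if_pos (List.mem_finRange k)]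

lemma sElt_one : sElt Γ G 1 = 1 := by
  apply List.prod_eq_one
  intro x hx
  simp only [List.mem_map] at hx
  obtain ⟨j, -, rfl⟩ := hx
  exact map_one _

/-- The fundamental "tree" lemma. -/
lemma sElt_mul_eq (p : ∀ i, G i) (i : Fin m) (g : G i)
    (hp : ∀ j, i < j → p j = 1 ∨ Γ.Adj i j) :
    sElt Γ G p * of' Γ G i ((p i)⁻¹ * g) = sElt Γ G (update p i g) := by
  classical
  set L := List.finRange m with hL
  have him : (i : ℕ) < L.length := by simp [hL]
  have hsplit : L = L.take i ++ i :: L.drop (i + 1) := by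
    conv_lhs => rw [← List.take_append_drop (i : ℕ) L]
    rw [List.drop_eq_getElem_cons him]
    simp [hL]
  have hpw : (L.take (i : ℕ) ++ i :: L.drop ((i : ℕ) + 1)).Pairwise (· < ·) := by
    rw [← hsplit, hL]; exact List.pairwise_lt_finRange m
  rw [List.pairwise_append] at hpw
  obtain ⟨-, hpw2, hcross⟩ := hpw
  rw [List.pairwise_cons] at hpw2
  have hT : ∀ j ∈ L.take (i : ℕ), j < i := fun j hj => hcross j hj i (List.mem_cons_self)
  have hD : ∀ j ∈ L.drop ((i : ℕ) + 1), i < j := hpw2.1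
  have expand : ∀ q : ∀ k, G k, sElt Γ G q =
      ((L.take (i : ℕ)).map fun j => of' Γ G j (q j)).prod * of' Γ G i (q i) *
        ((L.drop ((i : ℕ) + 1)).map fun j => of' Γ G j (q j)).prod := by
    intro q
    rw [sElt, ← hL]
    conv_lhs => rw [hsplit]
    rw [List.map_append, List.prod_append, List.map_cons, List.prod_cons, mul_assoc]
  have hcomm : Commute (of' Γ G i ((p i)⁻¹ * g))
      ((L.drop ((i : ℕ) + 1)).map fun j => of' Γ G j (p j)).prod := by
    apply Commute.list_prod_right
    intro x hx
    simp only [List.mem_map] at hx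
    obtain ⟨j, hj, rfl⟩ := hx
    rcases hp j (hD j hj) with h1 | h1
    · rw [h1, map_one]; exact Commute.one_right _
    · exact commute_of' Γ G h1 _ _
  rw [expand p, expand (update p i g)]
  have e1 : ((L.take (i : ℕ)).map fun j => of' Γ G j (update p i g j)).prod =
      ((L.take (i : ℕ)).map fun j => of' Γ G j (p j)).prod := by
    congr 1
    apply List.map_congr_left
    intro j hj
    rw [update_of_ne (ne_of_lt (hT j hj))]
  have e2 : ((L.drop ((i : ℕ) + 1)).map fun j => of' Γ G j (update p i g j)).prod =
      ((L.drop ((i : ℕ) + 1)).map fun j => of' Γ G j (p j)).prod := by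
    congr 1
    apply List.map_congr_left
    intro j hj
    rw [update_of_ne (ne_of_gt (hD j hj))]
  rw [e1, e2, update_self]
  have key : of' Γ G i (p i) *
      (((L.drop ((i : ℕ) + 1)).map fun j => of' Γ G j (p j)).prod * of' Γ G i ((p i)⁻¹ * g)) =
      of' Γ G i g * ((L.drop ((i : ℕ) + 1)).map fun j => of' Γ G j (p j)).prod := by
    rw [← hcomm.eq, ← mul_assoc, ← map_mul, mul_inv_cancel_left]
  rw [mul_assoc, mul_assoc, key, ← mul_assoc]

end GPK3

namespace GPK4
open Function GPK GPK3

variable {m : ℕ} (Γ : SimpleGraph (Fin m)) (G : Fin m → Type) [∀ i, Group (G i)]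

/-- `KP` with basepoints the identities. -/
abbrev KG : Type := KP Γ G (fun i => (1 : G i))

lemma mul_mulSingle (p : ∀ i, G i) (i : Fin m) (g : G i) :
    p * Pi.mulSingle i g = update p i (p i * g) := by
  funext j
  rcases eq_or_ne j i with rfl | hj
  · simp
  · simp [update_of_ne hj, Pi.mulSingle_eq_of_ne hj]

variable (M : Type) [Group M]

/-- Translation action of the product group on functions into a group `M`. -/
def actAut (q : ∀ i, G i) : MulAut ((∀ i, G i) → M) where
  toFun f p := f (p * q)
  invFun f p := f (p * q⁻¹)
  left_inv f := funext fun p => by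
    show f (p * q⁻¹ * q) = f p
    rw [mul_assoc, inv_mul_cancel, mul_one]
  right_inv f := funext fun p => by
    show f (p * q * q⁻¹) = f p
    rw [mul_assoc, mul_inv_cancel, mul_one]
  map_mul' f g := rfl

def act : (∀ i, G i) →* MulAut ((∀ i, G i) → M) :=
  MonoidHom.mk' (fun q => actAut G M q) (by
    intro a b
    ext f p
    show f (p * (a * b)) = f (p * a * b)
    rw [mul_assoc])

/-- The target of the cocycle homomorphism. -/
abbrev W : Type := ((∀ i, G i) → KG Γ G) ⋊[act G (KG Γ G)] (∀ i, G i)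

/-- The building blocks of the cocycle homomorphism. -/
def phiAt (i : Fin m) : G i →* W Γ G :=
  MonoidHom.mk' (fun g => ⟨fun p => kgen Γ _ p i (p i * g), Pi.mulSingle i g⟩) (by
    intro g h
    have hleft : ∀ p : ∀ i, G i, kgen Γ (fun i => (1 : G i)) p i (p i * (g * h)) =
        kgen Γ _ p i (p i * g) *
          kgen Γ _ (update p i (p i * g)) i (update p i (p i * g) i * h) := by
      intro p
      rw [update_self, krel1, mul_assoc]
    refine SemidirectProduct.ext ?_ ?_
    · funext p
      show kgen Γ (fun i => (1 : G i)) p i (p i * (g * h)) = kgen Γ (fun i => (1 : G i)) p i (p i * g) *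
        (fun p => kgen Γ (fun i => (1 : G i)) p i (p i * h)) (p * Pi.mulSingle i g)
      rw [mul_mulSingle]
      exact hleft p
    · exact map_mul (MonoidHom.mulSingle G i) g h)

@[simp] lemma phiAt_left (i : Fin m) (g : G i) (p : ∀ i, G i) :
    ((phiAt Γ G i g).left : (∀ i, G i) → KG Γ G) p = kgen Γ _ p i (p i * g) := rfl

@[simp] lemma phiAt_right (i : Fin m) (g : G i) :
    (phiAt Γ G i g).right = Pi.mulSingle i g := rfl

lemma phiAt_commute {i j : Fin m} (hadj : Γ.Adj i j) (g : G i) (h : G j) :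
    Commute (phiAt Γ G i g) (phiAt Γ G j h) := by
  have hij : i ≠ j := hadj.ne
  refine SemidirectProduct.ext ?_ ?_
  · funext p
    show kgen Γ (fun i => (1 : G i)) p i (p i * g) *
        (fun p => kgen Γ (fun i => (1 : G i)) p j (p j * h)) (p * Pi.mulSingle i g) =
      kgen Γ (fun i => (1 : G i)) p j (p j * h) *
        (fun p => kgen Γ (fun i => (1 : G i)) p i (p i * g)) (p * Pi.mulSingle j h)
    rw [mul_mulSingle, mul_mulSingle]
    have e1 : update p i (p i * g) j * h = p j * h := by rw [update_of_ne hij.symm]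
    have e2 : update p j (p j * h) i * g = p i * g := by rw [update_of_ne hij]
    beta_reduce
    rw [e1, e2]
    exact krel2 hadj p _ _
  · show Pi.mulSingle i g * Pi.mulSingle j h = Pi.mulSingle j h * Pi.mulSingle i g
    exact Pi.mulSingle_commute hij g h

/-- The cocycle homomorphism `Φ`. -/
def Phi : GraphProduct Γ G →* W Γ G :=
  QuotientGroup.lift _ (Monoid.CoprodI.lift fun i => phiAt Γ G i) (by
    apply Subgroup.normalClosure_le_normal
    rintro x ⟨i, j, g, h, hadj, rfl⟩
    simp only [SetLike.mem_coe, MonoidHom.mem_ker, map_mul, map_inv, Monoid.CoprodI.lift_of]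
    rw [(phiAt_commute Γ G hadj g h).eq]
    group)

lemma Phi_of' (i : Fin m) (g : G i) : Phi Γ G (of' Γ G i g) = phiAt Γ G i g := by
  show Phi Γ G (QuotientGroup.mk (Monoid.CoprodI.of g)) = _
  show Monoid.CoprodI.lift (fun i => phiAt Γ G i) (Monoid.CoprodI.of g) = _
  rw [Monoid.CoprodI.lift_of]

lemma Phi_right (w : GraphProduct Γ G) : (Phi Γ G w).right = GraphProduct.toPi Γ G w := by
  have : (SemidirectProduct.rightHom.comp (Phi Γ G)) = GraphProduct.toPi Γ G := by
    apply QuotientGroup.monoidHom_ext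
    apply Monoid.CoprodI.ext_hom
    intro i
    refine MonoidHom.ext fun g => ?_
    show SemidirectProduct.rightHom (Phi Γ G (of' Γ G i g)) = GraphProduct.toPi Γ G (of' Γ G i g)
    rw [Phi_of', toPi_of']
    rfl
  exact DFunLike.congr_fun this w

end GPK4

namespace GPK5
open Function GPK GPK3 GPK4

variable {m : ℕ} (Γ : SimpleGraph (Fin m)) (G : Fin m → Type) [∀ i, Group (G i)]

/-- The image of a generator of `KP` in the graph product. -/
def vElt (p : ∀ i, G i) (i : Fin m) (g : G i) : GraphProduct Γ G :=
  sElt Γ G p * of' Γ G i ((p i)⁻¹ * g) * (sElt Γ G (update p i g))⁻¹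

lemma vElt_mul (p : ∀ i, G i) (i : Fin m) (a b : G i) :
    vElt Γ G p i a * vElt Γ G (update p i a) i b = vElt Γ G p i b := by
  rw [vElt, vElt, vElt]
  have h1 : update (update p i a) i b = update p i b := by simp
  have h2 : update p i a i = a := by simp
  rw [h1, h2]
  have : of' Γ G i ((p i)⁻¹ * a) * (of' Γ G i (a⁻¹ * b)) = of' Γ G i ((p i)⁻¹ * b) := by
    rw [← map_mul]
    congr 1
    group
  calc sElt Γ G p * of' Γ G i ((p i)⁻¹ * a) * (sElt Γ G (update p i a))⁻¹ *
        (sElt Γ G (update p i a) * of' Γ G i (a⁻¹ * b) * (sElt Γ G (update p i b))⁻¹)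
      = sElt Γ G p * (of' Γ G i ((p i)⁻¹ * a) * of' Γ G i (a⁻¹ * b)) *
        (sElt Γ G (update p i b))⁻¹ := by group
    _ = _ := by rw [this]

lemma vElt_swap {i j : Fin m} (hadj : Γ.Adj i j) (p : ∀ i, G i) (a : G i) (b : G j) :
    vElt Γ G p i a * vElt Γ G (update p i a) j b =
      vElt Γ G p j b * vElt Γ G (update p j b) i a := by
  have hij : i ≠ j := hadj.ne
  have h1 : update (update p i a) j b = update (update p j b) i a := update_comm hij a b p -- fix?
  have h2 : update p i a j = p j := update_of_ne hij.symm a p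
  have h3 : update p j b i = p i := update_of_ne hij b p
  rw [vElt, vElt, vElt, vElt, h1, h2, h3]
  have hc : Commute (of' Γ G i ((p i)⁻¹ * a)) (of' Γ G j ((p j)⁻¹ * b)) :=
    commute_of' Γ G hadj _ _
  calc sElt Γ G p * of' Γ G i ((p i)⁻¹ * a) * (sElt Γ G (update p i a))⁻¹ *
        (sElt Γ G (update p i a) * of' Γ G j ((p j)⁻¹ * b) *
          (sElt Γ G (update (update p j b) i a))⁻¹)
      = sElt Γ G p * (of' Γ G i ((p i)⁻¹ * a) * of' Γ G j ((p j)⁻¹ * b)) *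
        (sElt Γ G (update (update p j b) i a))⁻¹ := by group
    _ = sElt Γ G p * (of' Γ G j ((p j)⁻¹ * b) * of' Γ G i ((p i)⁻¹ * a)) *
        (sElt Γ G (update (update p j b) i a))⁻¹ := by rw [hc.eq]
    _ = _ := by group

lemma vElt_tree {p : ∀ i, G i} {i : Fin m} (hp : ∀ j, i < j → p j = 1 ∨ Γ.Adj i j) (g : G i) :
    vElt Γ G p i g = 1 := by
  rw [vElt, sElt_mul_eq Γ G p i g hp, mul_inv_cancel]

lemma psi_rels : ∀ r ∈ rels Γ G (fun i => (1 : G i)),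
    FreeGroup.lift (fun x : Gen G => vElt Γ G x.1 x.2.1 x.2.2) r = 1 := by
  rintro r (⟨p, i, a, b, rfl⟩ | ⟨p, i, j, a, b, hadj, rfl⟩ | ⟨p, i, g, hp, rfl⟩) <;>
    simp only [gen, map_mul, map_inv, FreeGroup.lift_apply_of]
  · rw [vElt_mul, mul_inv_cancel]
  · rw [vElt_swap Γ G hadj, mul_inv_eq_one]
    group
  · exact vElt_tree Γ G hp g

/-- The homomorphism from the combinatorial model to the graph product. -/
def Psi : KG Γ G →* GraphProduct Γ G :=
  PresentedGroup.toGroup (psi_rels Γ G)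

@[simp] lemma Psi_kgen (p : ∀ i, G i) (i : Fin m) (g : G i) :
    Psi Γ G (kgen Γ (fun i => (1 : G i)) p i g) = vElt Γ G p i g :=
  PresentedGroup.toGroup.of _

lemma toPi_vElt (p : ∀ i, G i) (i : Fin m) (g : G i) :
    GraphProduct.toPi Γ G (vElt Γ G p i g) = 1 := by
  rw [vElt, map_mul, map_mul, map_inv, toPi_sElt, toPi_sElt, toPi_of', mul_mulSingle,
    mul_inv_cancel_left, mul_inv_cancel]

lemma Psi_mem_ker (x : KG Γ G) : Psi Γ G x ∈ GraphProductKernel Γ G := by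
  have h : (GraphProduct.toPi Γ G).comp (Psi Γ G) = 1 := by
    refine PresentedGroup.ext fun y => ?_
    obtain ⟨p, ⟨i, g⟩⟩ := y
    show GraphProduct.toPi Γ G (Psi Γ G (kgen Γ (fun i => (1 : G i)) p i g)) = 1
    rw [Psi_kgen, toPi_vElt]
  show GraphProduct.toPi Γ G (Psi Γ G x) = 1
  exact DFunLike.congr_fun h x

/-- `Psi` corestricted to the graph product kernel. -/
def PsiK : KG Γ G →* GraphProductKernel Γ G :=
  (Psi Γ G).codRestrict _ (Psi_mem_ker Γ G)

end GPK5

namespace GPK6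
open Function GPK GPK3 GPK4 GPK5

variable {m : ℕ} (Γ : SimpleGraph (Fin m)) (G : Fin m → Type) [∀ i, Group (G i)]

lemma left_mul (a b : W Γ G) (q : ∀ i, G i) :
    (a * b).left q = a.left q * b.left (q * a.right) := rfl

lemma left_inv_eval (a : W Γ G) (q : ∀ i, G i) :
    (a⁻¹).left q = (a.left (q * a.right⁻¹))⁻¹ := rfl

lemma Phi_list_left (p : ∀ i, G i) :
    ∀ l : List (Fin m), l.Pairwise (· < ·) →
      ∀ q : ∀ i, G i, (∀ t ∈ l, ∀ u, t < u → q u = 1) →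
        ((Phi Γ G ((l.map fun j => of' Γ G j (p j)).prod)).left : _) q = 1 := by
  intro l
  induction l with
  | nil =>
    intro _ q _
    rw [List.map_nil, List.prod_nil, map_one]
    rfl
  | cons j l ih =>
    intro hpw q hq
    obtain ⟨hj, hpw'⟩ := List.pairwise_cons.mp hpw
    rw [List.map_cons, List.prod_cons, map_mul, left_mul, Phi_of', phiAt_left, phiAt_right,
      mul_mulSingle]
    have h1 : kgen Γ (fun i => (1 : G i)) q j (q j * p j) = 1 :=
      krel3 (fun u hu => Or.inl (hq j (List.mem_cons_self) u hu)) _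
    have h2 : ((Phi Γ G ((l.map fun j => of' Γ G j (p j)).prod)).left : _)
        (update q j (q j * p j)) = 1 := by
      refine ih hpw' _ fun t ht u htu => ?_
      rw [update_of_ne (((hj t ht).trans htu).ne')]
      exact hq t (List.mem_cons_of_mem _ ht) u htu
    rw [h1, h2, one_mul]

lemma Phi_sElt_left_one (p : ∀ i, G i) : ((Phi Γ G (sElt Γ G p)).left : _) 1 = 1 :=
  Phi_list_left Γ G p (List.finRange m) (List.pairwise_lt_finRange m) 1
    (fun _ _ _ _ => rfl)

lemma Phi_sElt_right (p : ∀ i, G i) : (Phi Γ G (sElt Γ G p)).right = p := by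
  rw [Phi_right, toPi_sElt]

/-- The homomorphism from the graph product kernel to the combinatorial model. -/
def phiHom : GraphProductKernel Γ G →* KG Γ G :=
  MonoidHom.mk' (fun w => (Phi Γ G w.1).left 1) (by
    rintro ⟨w, hw⟩ ⟨v, hv⟩
    have hw1 : (Phi Γ G w).right = 1 := by
      rw [Phi_right]; exact hw
    show (Phi Γ G (w * v)).left 1 = _
    rw [map_mul, left_mul, hw1, one_mul])

lemma phi_psi_gen (p : ∀ i, G i) (i : Fin m) (g : G i) :
    ((Phi Γ G (vElt Γ G p i g)).left : _) 1 = kgen Γ (fun i => (1 : G i)) p i g := by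
  obtain ⟨c, hc⟩ : ∃ c, c = (p i)⁻¹ * g := ⟨_, rfl⟩
  rw [vElt, ← hc]
  simp only [map_mul, map_inv, left_mul, left_inv_eval, SemidirectProduct.mul_right,
    SemidirectProduct.inv_right, Phi_sElt_left_one, Phi_sElt_right, Phi_of', phiAt_left,
    phiAt_right, one_mul, mul_mulSingle]
  rw [hc, mul_inv_cancel_left]
  simp only [mul_inv_cancel, Phi_sElt_left_one, inv_one, mul_one]

end GPK6

namespace GPK7
open Function GPK GPK3 GPK4 GPK5 GPK6

variable {m : ℕ} (Γ : SimpleGraph (Fin m)) (G : Fin m → Type) [∀ i, Group (G i)]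

abbrev W' : Type :=
  ((∀ i, G i) → GraphProduct Γ G) ⋊[act G (GraphProduct Γ G)] (∀ i, G i)

lemma left_mul' (a b : W' Γ G) (q : ∀ i, G i) :
    (a * b).left q = a.left q * b.left (q * a.right) := rfl

lemma compat (q : ∀ i, G i) :
    (MonoidHom.compLeft (Psi Γ G) (∀ i, G i)).comp (act G (KG Γ G) q).toMonoidHom =
      ((act G (GraphProduct Γ G) ((MonoidHom.id _) q)).toMonoidHom).comp
        (MonoidHom.compLeft (Psi Γ G) (∀ i, G i)) := rfl

def Theta1 : GraphProduct Γ G →* W' Γ G :=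
  (SemidirectProduct.map (MonoidHom.compLeft (Psi Γ G) (∀ i, G i)) (MonoidHom.id _)
    (compat Γ G)).comp (Phi Γ G)

def Theta2 : GraphProduct Γ G →* W' Γ G :=
  MonoidHom.mk' (fun w =>
    ⟨fun q => sElt Γ G q * w * (sElt Γ G (q * GraphProduct.toPi Γ G w))⁻¹,
      GraphProduct.toPi Γ G w⟩) (by
    intro w v
    refine SemidirectProduct.ext ?_ ?_
    · funext q
      show sElt Γ G q * (w * v) *
          (sElt Γ G (q * GraphProduct.toPi Γ G (w * v)))⁻¹ =
        (sElt Γ G q * w * (sElt Γ G (q * GraphProduct.toPi Γ G w))⁻¹) *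
          (sElt Γ G (q * GraphProduct.toPi Γ G w) * v *
            (sElt Γ G (q * GraphProduct.toPi Γ G w * GraphProduct.toPi Γ G v))⁻¹)
      rw [map_mul, ← mul_assoc q]
      group
    · exact map_mul _ _ _)

lemma Theta_eq : Theta1 Γ G = Theta2 Γ G := by
  apply QuotientGroup.monoidHom_ext
  apply Monoid.CoprodI.ext_hom
  intro i
  refine MonoidHom.ext fun g => ?_
  show Theta1 Γ G (of' Γ G i g) = Theta2 Γ G (of' Γ G i g)
  refine SemidirectProduct.ext ?_ ?_
  · funext q
    show Psi Γ G ((Phi Γ G (of' Γ G i g)).left q) =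
      sElt Γ G q * of' Γ G i g * (sElt Γ G (q * GraphProduct.toPi Γ G (of' Γ G i g)))⁻¹
    rw [Phi_of', phiAt_left, Psi_kgen, vElt, inv_mul_cancel_left, toPi_of', mul_mulSingle]
  · show (Phi Γ G (of' Γ G i g)).right = GraphProduct.toPi Γ G (of' Γ G i g)
    rw [Phi_right]

lemma psi_phi (w : GraphProductKernel Γ G) :
    Psi Γ G (phiHom Γ G w) = (w : GraphProduct Γ G) := by
  have h1 : Psi Γ G (phiHom Γ G w) = (Theta1 Γ G (w : GraphProduct Γ G)).left 1 := rfl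
  rw [h1, Theta_eq]
  show sElt Γ G 1 * (w : GraphProduct Γ G) *
      (sElt Γ G (1 * GraphProduct.toPi Γ G (w : GraphProduct Γ G)))⁻¹ = _
  have hw : GraphProduct.toPi Γ G (w : GraphProduct Γ G) = 1 := w.2
  rw [hw, mul_one, sElt_one, one_mul, inv_one, mul_one]

/-- The graph product kernel is isomorphic to the combinatorial model. -/
def mainIso : GraphProductKernel Γ G ≃* KG Γ G := by
  refine MonoidHom.toMulEquiv (phiHom Γ G) (PsiK Γ G) ?_ ?_
  · refine MonoidHom.ext fun w => Subtype.ext ?_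
    show Psi Γ G (phiHom Γ G w) = (w : GraphProduct Γ G)
    exact psi_phi Γ G w
  · refine PresentedGroup.ext fun x => ?_
    obtain ⟨p, ⟨i, g⟩⟩ := x
    show phiHom Γ G (PsiK Γ G (kgen Γ (fun i => (1 : G i)) p i g)) =
      kgen Γ (fun i => (1 : G i)) p i g
    have h1 : PsiK Γ G (kgen Γ (fun i => (1 : G i)) p i g) =
        ⟨vElt Γ G p i g, show GraphProduct.toPi Γ G _ = 1 from toPi_vElt Γ G p i g⟩ := by
      refine Subtype.ext ?_
      show Psi Γ G _ = _
      rw [Psi_kgen]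
    rw [h1]
    exact phi_psi_gen Γ G p i g

end GPK7

theorem graphProductKernel_iso_of_equiv' {m : ℕ} (Γ : SimpleGraph (Fin m))
    (G H : Fin m → Type) [∀ i, Group (G i)] [∀ i, Group (H i)]
    (hcard : ∀ i, Nonempty (G i ≃ H i)) :
    Nonempty ((GraphProductKernel Γ G) ≃* (GraphProductKernel Γ H)) := by
  classical
  refine ⟨((GPK7.mainIso Γ G).trans (GPK2.equivKP
    (fun i => (Classical.choice (hcard i)).trans
      (Equiv.swap ((Classical.choice (hcard i)) 1) 1))
    (fun i => ?_))).trans (GPK7.mainIso Γ H).symm⟩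
  simp

/-- Theorem 1.8 of the paper: graph product kernels depend only on the cardinalities of the
underlying groups. -/
theorem graphProductKernel_iso_of_equiv {m : ℕ} (Γ : SimpleGraph (Fin m))
    (G H : Fin m → Type) [∀ i, Group (G i)] [∀ i, Group (H i)]
    (hcard : ∀ i, Nonempty (G i ≃ H i)) :
    Nonempty ((GraphProductKernel Γ G) ≃* (GraphProductKernel Γ H)) := by
  classical
  refine ⟨((GPK7.mainIso Γ G).trans (GPK2.equivKP
    (fun i => (Classical.choice (hcard i)).trans
      (Equiv.swap ((Classical.choice (hcard i)) 1) 1))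
    (fun i => ?_))).trans (GPK7.mainIso Γ H).symm⟩
  simp
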